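/- In a standard quasi-metric space X,d, if a directed family of formal balls (x_i, r_i) has supremum (x, r), then for every real s ≥ -r, the family (x_i, r_i + s) has supremum (x, r + s). -/

import Mathlib

open scoped ENNReal NNReal Classical

/-- A formal ball: a point together with a non-negative real radius. -/
structure FormalBall (X : Type*) where
  center : X
  radius : ℝ≥0

/-- A quasi-metric on `X`: a `[0,∞]`-valued distance with `d x x = 0`, the triangle
inequality, and `d x y = d y x = 0 → x = y`. -/
structure QuasiMetric (X : Type*) where
  d : X → X → ℝ≥0∞
  refl : ∀ x, d x x = 0
  triangle : ∀ x y z, d x z ≤ d x y + d y z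
  separated : ∀ x y, d x y = 0 → d y x = 0 → x = y

/-- The order on formal balls: `(x,r) ≤ (y,s)` iff `d x y ≤ r - s`
(equivalently `s ≤ r` and `d x y ≤ r - s`). -/
def ballLE {X : Type*} (q : QuasiMetric X) (b c : FormalBall X) : Prop :=
  c.radius ≤ b.radius ∧ q.d b.center c.center ≤ ↑(b.radius - c.radius)

/-- The partial order of formal balls `B(X,d)`. -/
def ballOrder {X : Type*} (q : QuasiMetric X) : PartialOrder (FormalBall X) where
  le := ballLE q
  le_refl b := ⟨le_rfl, by simp [ballLE, q.refl]⟩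
  le_trans a b c hab hbc := ⟨hbc.1.trans hab.1, by
    calc q.d a.center c.center ≤ q.d a.center b.center + q.d b.center c.center :=
          q.triangle _ _ _
      _ ≤ ↑(a.radius - b.radius) + ↑(b.radius - c.radius) := add_le_add hab.2 hbc.2
      _ = ↑(a.radius - c.radius) := by
          rw [← ENNReal.coe_add, tsub_add_tsub_cancel hab.1 hbc.1]⟩
  le_antisymm a b hab hba := by
    have hr : b.radius = a.radius := le_antisymm hab.1 hba.1
    have h1 : q.d a.center b.center = 0 := le_antisymm (by simpa [hr] using hab.2) bot_le
    have h2 : q.d b.center a.center = 0 := le_antisymm (by simpa [hr] using hba.2) bot_le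
    have hc := q.separated _ _ h1 h2
    cases a; cases b; simp_all

/-- Standardness: a directed family of formal balls has a supremum iff the family with all
radii uniformly shifted by `s` has one. -/
def Standard {X : Type*} (q : QuasiMetric X) : Prop :=
  letI := ballOrder q
  ∀ S : Set (FormalBall X), S.Nonempty → DirectedOn (· ≤ ·) S → ∀ s : ℝ≥0,
    ((∃ b, IsLUB S b) ↔
      ∃ b, IsLUB ((fun c : FormalBall X => FormalBall.mk c.center (c.radius + s)) '' S) b)

namespace MyAux

variable {X : Type*} (q : QuasiMetric X)

lemma ballLE_iff (a c : FormalBall X) :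
    (letI := ballOrder q; a ≤ c) ↔
      c.radius ≤ a.radius ∧ q.d a.center c.center ≤ ↑(a.radius - c.radius) := Iff.rfl

lemma lub_upshift (hstd : Standard q) (S : Set (FormalBall X)) (hne : S.Nonempty)
    (hdir : DirectedOn (ballLE q) S) (b : FormalBall X)
    (hlub : letI := ballOrder q; IsLUB S b) (t : ℝ≥0) :
    letI := ballOrder q
    IsLUB ((fun c : FormalBall X => FormalBall.mk c.center (c.radius + t)) '' S)
      ⟨b.center, b.radius + t⟩ := by
  letI := ballOrder q
  set f : FormalBall X → FormalBall X := fun c => FormalBall.mk c.center (c.radius + t) with hf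
  have hub : ⟨b.center, b.radius + t⟩ ∈ upperBounds (f '' S) := by
    rintro u ⟨c, hc, rfl⟩
    have h := hlub.1 hc
    rw [ballLE_iff] at h ⊢
    refine ⟨add_le_add_left h.1 t, ?_⟩
    simpa [f, add_tsub_add_eq_tsub_right] using h.2
  obtain ⟨b', hb'⟩ := (hstd S hne hdir t).mp ⟨b, hlub⟩
  have hle : (letI := ballOrder q; b' ≤ ⟨b.center, b.radius + t⟩) := hb'.2 hub
  have ht : t ≤ b'.radius := le_add_self.trans (hle.1 : b.radius + t ≤ b'.radius)
  have hdown : (⟨b'.center, b'.radius - t⟩ : FormalBall X) ∈ upperBounds S := by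
    intro c hc
    have h := hb'.1 (Set.mem_image_of_mem f hc)
    rw [ballLE_iff] at h ⊢
    simp only [f] at h
    have h1 : b'.radius ≤ c.radius + t := h.1
    have h2 : b'.radius - t ≤ c.radius := tsub_le_iff_right.mpr h1
    refine ⟨h2, ?_⟩
    have key : c.radius - (b'.radius - t) = c.radius + t - b'.radius := by
      apply NNReal.coe_injective
      rw [NNReal.coe_sub h2, NNReal.coe_sub ht, NNReal.coe_sub h1]
      push_cast
      ring
    rw [key]
    exact h.2
  have hble : (letI := ballOrder q; b ≤ ⟨b'.center, b'.radius - t⟩) := hlub.2 hdown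
  have hr1 : b'.radius - t ≤ b.radius := hble.1
  have hr : b'.radius = b.radius + t :=
    le_antisymm (by rwa [← tsub_le_iff_right]) hle.1
  have hc1 : q.d b'.center b.center = 0 :=
    le_antisymm (by simpa [hr] using hle.2) bot_le
  have hc2 : q.d b.center b'.center = 0 := by
    have := hble.2
    rw [hr] at this
    simpa using this
  have hb'eq : b' = ⟨b.center, b.radius + t⟩ := by
    have := q.separated _ _ hc1 hc2
    cases b'
    simp_all
  rw [← hb'eq]
  exact hb'

end MyAux

namespace MyAux

lemma downshift_mono {X : Type*} (q : QuasiMetric X) (t : ℝ≥0) {a c : FormalBall X}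
    (h : ballLE q a c) (htc : t ≤ c.radius) :
    ballLE q ⟨a.center, a.radius - t⟩ ⟨c.center, c.radius - t⟩ := by
  have hta : t ≤ a.radius := htc.trans h.1
  refine ⟨tsub_le_tsub_right h.1 t, ?_⟩
  have key : a.radius - t - (c.radius - t) = a.radius - c.radius := by
    apply NNReal.coe_injective
    rw [NNReal.coe_sub (tsub_le_tsub_right h.1 t), NNReal.coe_sub hta, NNReal.coe_sub htc,
      NNReal.coe_sub h.1]
    ring
  rw [key]
  exact h.2

end MyAux

/-- in a standard quasi-metric space, if a directed family `(x_i,r_i)` has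
supremum `(x,r)`, then for every real `s ≥ -r` the family `(x_i, r_i + s)` has supremum
`(x, r + s)`. -/
theorem lub_shift_real {X : Type*} (q : QuasiMetric X) (hstd : Standard q)
    (S : Set (FormalBall X)) (hne : S.Nonempty)
    (hdir : letI := ballOrder q; DirectedOn (· ≤ ·) S)
    (b : FormalBall X) (hlub : letI := ballOrder q; IsLUB S b)
    (s : ℝ) (hs : -(b.radius : ℝ) ≤ s) :
    letI := ballOrder q
    IsLUB ((fun c : FormalBall X =>
        FormalBall.mk c.center (((c.radius : ℝ) + s).toNNReal)) '' S)
      ⟨b.center, ((b.radius : ℝ) + s).toNNReal⟩ := by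
  letI := ballOrder q
  rcases le_or_gt 0 s with hs0 | hs0
  · set t := s.toNNReal with htdef
    have hset : (fun c : FormalBall X =>
          FormalBall.mk c.center (((c.radius : ℝ) + s).toNNReal)) '' S
        = (fun c : FormalBall X => FormalBall.mk c.center (c.radius + t)) '' S := by
      apply Set.image_congr
      intro c _
      congr 1
      rw [Real.toNNReal_add c.radius.coe_nonneg hs0, Real.toNNReal_coe]
    have hrad : ((b.radius : ℝ) + s).toNNReal = b.radius + t := by
      rw [Real.toNNReal_add b.radius.coe_nonneg hs0, Real.toNNReal_coe]
    rw [hset, hrad]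
    exact MyAux.lub_upshift q hstd S hne hdir b hlub t
  · set t := (-s).toNNReal with htdef
    have htR : (t : ℝ) = -s := Real.coe_toNNReal _ (by linarith)
    have htb : t ≤ b.radius := by
      rw [← NNReal.coe_le_coe, htR]; linarith
    have key : ∀ r : ℝ≥0, t ≤ r → ((r : ℝ) + s).toNNReal = r - t := by
      intro r htr
      apply NNReal.coe_injective
      rw [NNReal.coe_sub htr, Real.coe_toNNReal, htR]
      · ring
      · rw [← NNReal.coe_le_coe, htR] at htr; linarith
    have htmem : ∀ c ∈ S, t ≤ c.radius := fun c hc => htb.trans (hlub.1 hc).1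
    set S' : Set (FormalBall X) := (fun c : FormalBall X =>
      FormalBall.mk c.center (c.radius - t)) '' S with hS'
    have hset : (fun c : FormalBall X =>
          FormalBall.mk c.center (((c.radius : ℝ) + s).toNNReal)) '' S = S' := by
      apply Set.image_congr
      intro c hc
      congr 1
      exact key _ (htmem c hc)
    have hne' : S'.Nonempty := hne.image _
    have hdir' : DirectedOn (ballLE q) S' := by
      rintro _ ⟨c1, h1, rfl⟩ _ ⟨c2, h2, rfl⟩
      obtain ⟨c3, h3, hle1, hle2⟩ := hdir c1 h1 c2 h2
      exact ⟨_, Set.mem_image_of_mem _ h3,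
        MyAux.downshift_mono q t hle1 (htmem c3 h3),
        MyAux.downshift_mono q t hle2 (htmem c3 h3)⟩
    have himg : (fun c : FormalBall X => FormalBall.mk c.center (c.radius + t)) '' S' = S := by
      rw [hS', Set.image_image]
      have : ∀ c ∈ S, FormalBall.mk c.center (c.radius - t + t) = c := by
        intro c hc
        have := tsub_add_cancel_of_le (htmem c hc)
        cases c; simp_all
      calc (fun c : FormalBall X => FormalBall.mk c.center (c.radius - t + t)) '' S
          = id '' S := Set.image_congr this
        _ = S := Set.image_id S
    obtain ⟨b'', hb''⟩ := (hstd S' hne' hdir' t).mpr ⟨b, by rwa [himg]⟩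
    have h2 := MyAux.lub_upshift q hstd S' hne' hdir' b'' hb'' t
    rw [himg] at h2
    have heq : b = ⟨b''.center, b''.radius + t⟩ := hlub.unique h2
    have hcen : b.center = b''.center := by rw [heq]
    have hrad2 : ((b.radius : ℝ) + s).toNNReal = b''.radius := by
      rw [key _ htb, heq]
      exact add_tsub_cancel_right _ _
    rw [hset, hcen, hrad2]
    exact hb''
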